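/- Let (K,D_K) ⊆ (L,D_L) be an extension of 𝔤-fields and assume (K,D_K) is strict. Then the field extension K ⊆ L is separable; equivalently (MacLane's criterion), K and L^p are linearly disjoint over K^p inside L: every finite family of elements of K that is linearly independent over K^p remains linearly independent over L^p when regarded in L. -/

import Mathlib

open scoped TensorProduct

noncomputable section

/-- The ideal `(X₁^pm, …, X_e^pm)` of the polynomial ring `k[X₁,…,X_e]`. -/
def TruncIdeal (k : Type*) [CommRing k] (e pm : ℕ) : Ideal (MvPolynomial (Fin e) k) :=
  Ideal.span (Set.range fun t : Fin e => (MvPolynomial.X t : MvPolynomial (Fin e) k) ^ pm)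

/-- The truncated polynomial algebra `A = k[X₁,…,X_e]/(X₁^pm, …, X_e^pm)`. -/
abbrev TruncAlg (k : Type*) [CommRing k] (e pm : ℕ) :=
  MvPolynomial (Fin e) k ⧸ TruncIdeal k e pm

/-- The image of the monomial `X^i` in the truncated polynomial algebra. -/
def XA (k : Type*) [CommRing k] (e pm : ℕ) (i : Fin e →₀ ℕ) : TruncAlg k e pm :=
  Ideal.Quotient.mk (TruncIdeal k e pm) (MvPolynomial.monomial i (1 : k))

/-- The finite set `[pm]^e` of multi-indices `i` with `i t ≤ pm - 1` for all `t`. -/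
def box (e pm : ℕ) : Finset (Fin e →₀ ℕ) :=
  Finset.Iic (Finsupp.equivFunOnFinite.symm fun _ => pm - 1)

/-- The total degree `|i| = i 1 + … + i e` of a multi-index. -/
def mdeg {e : ℕ} (i : Fin e →₀ ℕ) : ℕ := ∑ t, i t

/-- A `k`-Hopf algebra structure on the truncated polynomial algebra `A`, whose counit is
evaluation at `X = 0`; i.e. a truncated group scheme `𝔤` with underlying scheme `Spec A`. -/
structure TruncHopf (k : Type*) [CommRing k] (e pm : ℕ) where
  /-- the comultiplication `Δ : A → A ⊗[k] A`, a `k`-algebra homomorphism -/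
  comul : TruncAlg k e pm →ₐ[k] TruncAlg k e pm ⊗[k] TruncAlg k e pm
  /-- the counit `ε : A → k` -/
  counit : TruncAlg k e pm →ₐ[k] k
  /-- the counit is evaluation at `X = 0` -/
  counit_monomial : ∀ i : Fin e →₀ ℕ, counit (XA k e pm i) = if i = 0 then 1 else 0
  /-- coassociativity of `Δ` -/
  coassoc : (Algebra.TensorProduct.assoc k k k (TruncAlg k e pm) (TruncAlg k e pm)
        (TruncAlg k e pm)).toAlgHom.comp
        ((Algebra.TensorProduct.map comul (AlgHom.id k (TruncAlg k e pm))).comp comul)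
      = (Algebra.TensorProduct.map (AlgHom.id k (TruncAlg k e pm)) comul).comp comul
  /-- left counit axiom: `(ε ⊗ id) ∘ Δ = id` -/
  counit_comul_left : (Algebra.TensorProduct.lid k (TruncAlg k e pm)).toAlgHom.comp
        ((Algebra.TensorProduct.map counit (AlgHom.id k (TruncAlg k e pm))).comp comul)
      = AlgHom.id k (TruncAlg k e pm)
  /-- right counit axiom: `(id ⊗ ε) ∘ Δ = id` -/
  counit_comul_right : (Algebra.TensorProduct.rid k k (TruncAlg k e pm)).toAlgHom.comp
        ((Algebra.TensorProduct.map (AlgHom.id k (TruncAlg k e pm)) counit).comp comul)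
      = AlgHom.id k (TruncAlg k e pm)
  /-- the antipode `S : A → A` -/
  antipode : TruncAlg k e pm →ₗ[k] TruncAlg k e pm
  /-- left antipode axiom: `m ∘ (S ⊗ id) ∘ Δ = η ∘ ε` -/
  antipode_left : (LinearMap.mul' k (TruncAlg k e pm)).comp
        ((TensorProduct.map antipode LinearMap.id).comp comul.toLinearMap)
      = (Algebra.linearMap k (TruncAlg k e pm)).comp counit.toLinearMap
  /-- right antipode axiom: `m ∘ (id ⊗ S) ∘ Δ = η ∘ ε` -/
  antipode_right : (LinearMap.mul' k (TruncAlg k e pm)).comp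
        ((TensorProduct.map LinearMap.id antipode).comp comul.toLinearMap)
      = (Algebra.linearMap k (TruncAlg k e pm)).comp counit.toLinearMap

/-- An `pm`-truncated `e`-dimensional Hasse–Schmidt derivation on the commutative `k`-algebra
`R`, given by its family of coefficients `D i : R → R` (for multi-indices `i ∈ [pm]^e`):
equivalently, a `k`-algebra homomorphism `R → R ⊗[k] A` (with `A` the truncated polynomial
algebra in `e` variables) which is a section of the projection `R ⊗[k] A → R` killing the
variables. -/
structure TruncHSDer (k R : Type*) [CommRing k] [CommRing R] [Algebra k R] (e pm : ℕ) where
  /-- the coefficient maps `D_i`, each of which is `k`-linear -/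
  D : (Fin e →₀ ℕ) → R →ₗ[k] R
  D_zero : D 0 = LinearMap.id
  D_one : ∀ i : Fin e →₀ ℕ, i ≠ 0 → D i 1 = 0
  D_mul : ∀ i : Fin e →₀ ℕ, (∀ t, i t < pm) → ∀ x y : R,
    D i (x * y) = ∑ q ∈ Finset.HasAntidiagonal.antidiagonal i, D q.1 x * D q.2 y
  D_trunc : ∀ i : Fin e →₀ ℕ, (∃ t, pm ≤ i t) → D i = 0

/-- `D` is a `𝔤`-derivation for the truncated group scheme `𝔤` given by the Hopf algebra `H`:
the associated map `D : R → R ⊗[k] A`, `r ↦ ∑ᵢ Dᵢ(r) ⊗ X^i`, is coassociative, i.e.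
`(D ⊗ id_A) ∘ D = (id_R ⊗ Δ) ∘ D` (so `R` is an `A`-comodule algebra). -/
def IsGDer {k R : Type*} [CommRing k] [CommRing R] [Algebra k R] {e pm : ℕ}
    (H : TruncHopf k e pm) (D : TruncHSDer k R e pm) : Prop :=
  ∀ r : R,
    (TensorProduct.assoc k R (TruncAlg k e pm) (TruncAlg k e pm))
        (∑ i ∈ box e pm,
          (∑ j ∈ box e pm, D.D j (D.D i r) ⊗ₜ[k] XA k e pm j) ⊗ₜ[k] XA k e pm i)
      = ∑ i ∈ box e pm, D.D i r ⊗ₜ[k] H.comul (XA k e pm i)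

/-- `(K, D)` is strict: the ring of constants `⋂_{|i| = 1} ker Dᵢ` coincides with
`K^p = {x^p : x ∈ K}`. -/
def IsStrictT {k K : Type*} [CommRing k] [CommRing K] [Algebra k K] {e pm : ℕ} (p : ℕ)
    (D : TruncHSDer k K e pm) : Prop :=
  ∀ x : K, (∀ i : Fin e →₀ ℕ, mdeg i = 1 → D.D i x = 0) ↔ ∃ y : K, y ^ p = x


section AuxLemmas

lemma mdeg_add' {e : ℕ} (a b : Fin e →₀ ℕ) : mdeg (a + b) = mdeg a + mdeg b := by
  simp [mdeg, Finsupp.add_apply, Finset.sum_add_distrib]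

lemma mdeg_eq_zero' {e : ℕ} {i : Fin e →₀ ℕ} (h : mdeg i = 0) : i = 0 := by
  ext t
  have := Finset.sum_eq_zero_iff.mp h t (Finset.mem_univ t)
  simpa using this

lemma ne_zero_of_mdeg_one {e : ℕ} {i : Fin e →₀ ℕ} (hi : mdeg i = 1) : i ≠ 0 := by
  intro h
  rw [h] at hi
  simp [mdeg] at hi

lemma antidiagonal_of_mdeg_one {e : ℕ} {i : Fin e →₀ ℕ} (hi : mdeg i = 1) :
    Finset.HasAntidiagonal.antidiagonal i = {((0 : Fin e →₀ ℕ), i), (i, (0 : Fin e →₀ ℕ))} := by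
  ext q
  rw [Finset.HasAntidiagonal.mem_antidiagonal]
  constructor
  · intro hq
    have hsum : mdeg q.1 + mdeg q.2 = 1 := by rw [← mdeg_add', hq, hi]
    rcases Nat.eq_zero_or_pos (mdeg q.1) with h1 | h1
    · have hq1 : q.1 = 0 := mdeg_eq_zero' h1
      have hq2 : q.2 = i := by rw [← hq, hq1, zero_add]
      simp [Finset.mem_insert, Prod.ext_iff, hq1, hq2]
    · have h2 : mdeg q.2 = 0 := by omega
      have hq2 : q.2 = 0 := mdeg_eq_zero' h2
      have hq1 : q.1 = i := by rw [← hq, hq2, add_zero]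
      simp [Finset.mem_insert, Prod.ext_iff, hq1, hq2]
  · intro hq
    simp only [Finset.mem_insert, Finset.mem_singleton] at hq
    rcases hq with h | h <;> rw [h] <;> simp

variable {k R : Type*} [CommRing k] [CommRing R] [Algebra k R] {e pm : ℕ}

lemma TruncHSDer.D_zero_apply (D : TruncHSDer k R e pm) (x : R) : D.D 0 x = x := by
  rw [D.D_zero]; rfl

/-- For `|i| = 1`, the map `Dᵢ` is an ordinary derivation. -/
lemma TruncHSDer.der_of_mdeg_one (D : TruncHSDer k R e pm) (hpm : 1 < pm)
    {i : Fin e →₀ ℕ} (hi : mdeg i = 1) (x y : R) :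
    D.D i (x * y) = x * D.D i y + D.D i x * y := by
  have hlt : ∀ t, i t < pm := by
    intro t
    have h1 : i t ≤ mdeg i := Finset.single_le_sum (fun _ _ => Nat.zero_le _) (Finset.mem_univ t)
    omega
  rw [D.D_mul i hlt x y, antidiagonal_of_mdeg_one hi]
  have hne : ((0 : Fin e →₀ ℕ), i) ≠ (i, (0 : Fin e →₀ ℕ)) := by
    intro h
    exact ne_zero_of_mdeg_one hi (by simpa using (Prod.ext_iff.mp h).1.symm)
  rw [Finset.sum_insert (by simpa using hne), Finset.sum_singleton]
  simp [D.D_zero_apply]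

lemma TruncHSDer.der_pow (D : TruncHSDer k R e pm) (hpm : 1 < pm)
    {i : Fin e →₀ ℕ} (hi : mdeg i = 1) (y : R) (n : ℕ) :
    D.D i (y ^ (n + 1)) = ((n + 1 : ℕ) : R) * (y ^ n * D.D i y) := by
  induction n with
  | zero => simp
  | succ n ih =>
    rw [pow_succ, D.der_of_mdeg_one hpm hi, ih]
    push_cast
    ring

/-- In characteristic `p`, each `Dᵢ` with `|i| = 1` kills `p`-th powers. -/
lemma TruncHSDer.der_pow_char (D : TruncHSDer k R e pm) (p : ℕ) [Fact p.Prime] [CharP R p]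
    (hpm : 1 < pm) {i : Fin e →₀ ℕ} (hi : mdeg i = 1) (y : R) :
    D.D i (y ^ p) = 0 := by
  have hp1 : p - 1 + 1 = p := Nat.succ_pred_eq_of_pos (Fact.out : p.Prime).pos
  have := D.der_pow hpm hi y (p - 1)
  rw [hp1] at this
  rw [this, CharP.cast_eq_zero, zero_mul]

end AuxLemmas

universe u

/-- If `(K, D_K) ⊆ (L, D_L)` is an extension of `𝔤`-fields and `(K, D_K)`
is strict, then `K ⊆ L` is separable: by MacLane's criterion, `K` and `L^p` are linearly
disjoint over `K^p` inside `L`. -/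
theorem separable_of_strict
    (p : ℕ) [Fact p.Prime] (e m : ℕ) (he : 0 < e) (hm : 0 < m)
    (k : Type u) [Field k] [CharP k p] [ExpChar k p] [PerfectRing k p]
    (K L : Type u) [Field K] [Field L] [Algebra k K] [Algebra k L]
    [Algebra K L] [IsScalarTower k K L]
    (H : TruncHopf k e (p ^ m))
    (DK : TruncHSDer k K e (p ^ m)) (DL : TruncHSDer k L e (p ^ m))
    (hDK : IsGDer H DK) (hDL : IsGDer H DL)
    (hext : ∀ (i : Fin e →₀ ℕ) (x : K), DL.D i (algebraMap K L x) = algebraMap K L (DK.D i x))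
    (hstrict : IsStrictT p DK)
    (n : ℕ) (x : Fin n → K)
    (hind : ∀ a : Fin n → K, ∑ j, a j ^ p * x j = 0 → ∀ j, a j = 0) :
    ∀ b : Fin n → L, ∑ j, b j ^ p * algebraMap K L (x j) = 0 → ∀ j, b j = 0 := by
  classical
  have hp : p.Prime := Fact.out
  have hp0 : p ≠ 0 := hp.ne_zero
  have hpm : 1 < p ^ m := by
    calc 1 < p := hp.one_lt
    _ = p ^ 1 := (pow_one p).symm
    _ ≤ p ^ m := Nat.pow_le_pow_right hp.pos hm
  have hKp : CharP K p := charP_of_injective_algebraMap (algebraMap k K).injective p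
  have hLp : CharP L p := charP_of_injective_algebraMap (algebraMap k L).injective p
  have hKe : ExpChar K p := ExpChar.prime hp
  have hinj : Function.Injective (algebraMap K L) := (algebraMap K L).injective
  -- the subfield `(algebraMap K L)(K^p)` of `L`
  set C0 : Subfield L := ((algebraMap K L).comp (frobenius K p)).fieldRange with hC0
  have hC0mem : ∀ z : L, z ∈ C0 ↔ ∃ y : K, algebraMap K L (y ^ p) = z := by
    intro z
    rw [hC0, RingHom.mem_fieldRange]
    constructor
    · rintro ⟨y, rfl⟩; exact ⟨y, by simp [frobenius_def]⟩
    · rintro ⟨y, rfl⟩; exact ⟨y, by simp [frobenius_def]⟩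
  -- Kolchin-style shortening: a family of constants of `L` which is linearly independent
  -- over `(K^p)‾` is linearly independent over `K‾`.
  have stepD : ∀ t : Finset L, (∀ v ∈ t, ∀ i : Fin e →₀ ℕ, mdeg i = 1 → DL.D i v = 0) →
      (∀ y : L → K, (∑ v ∈ t, algebraMap K L (y v ^ p) * v) = 0 → ∀ v ∈ t, y v = 0) →
      ∀ a : L → K, (∑ v ∈ t, algebraMap K L (a v) * v) = 0 → ∀ v ∈ t, a v = 0 := by
    intro t hconst hindep
    suffices H : ∀ N : ℕ, ∀ a : L → K, (t.filter (fun v => a v ≠ 0)).card ≤ N →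
        (∑ v ∈ t, algebraMap K L (a v) * v) = 0 → ∀ v ∈ t, a v = 0 by
      intro a ha v hv
      exact H _ a le_rfl ha v hv
    intro N
    induction N with
    | zero =>
      intro a hcard hsum v hv
      by_contra hne
      have hmem : v ∈ t.filter (fun v => a v ≠ 0) := Finset.mem_filter.2 ⟨hv, hne⟩
      have := Finset.card_pos.2 ⟨v, hmem⟩
      omega
    | succ N ih =>
      intro a hcard hsum
      by_contra hcon
      push_neg at hcon
      obtain ⟨v0, hv0t, hv00⟩ := hcon
      set a' : L → K := fun v => a v / a v0 with ha'
      have ha'v0 : a' v0 = 1 := div_self hv00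
      have hsum' : ∑ v ∈ t, algebraMap K L (a' v) * v = 0 := by
        have : ∑ v ∈ t, algebraMap K L (a' v) * v
            = (∑ v ∈ t, algebraMap K L (a v) * v) * (algebraMap K L (a v0))⁻¹ := by
          rw [Finset.sum_mul]
          refine Finset.sum_congr rfl fun v _ => ?_
          rw [ha']
          rw [map_div₀, div_eq_mul_inv]
          ring
        rw [this, hsum, zero_mul]
      -- derivatives of the normalized coefficients vanish
      have ha'0 : ∀ i : Fin e →₀ ℕ, mdeg i = 1 → ∀ v ∈ t, DK.D i (a' v) = 0 := by
        intro i hi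
        have hine : i ≠ 0 := ne_zero_of_mdeg_one hi
        refine ih (fun v => DK.D i (a' v)) ?_ ?_
        · show (t.filter (fun v => DK.D i (a' v) ≠ 0)).card ≤ N
          have hsub : t.filter (fun v => DK.D i (a' v) ≠ 0)
              ⊆ (t.filter (fun v => a v ≠ 0)).erase v0 := by
              intro v hv
              rw [Finset.mem_filter] at hv
              rw [Finset.mem_erase, Finset.mem_filter]
              refine ⟨?_, hv.1, ?_⟩
              · rintro rfl
                exact hv.2 (by rw [ha'v0, DK.D_one i hine])
              · intro h0
                refine hv.2 ?_
                show DK.D i (a v / a v0) = 0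
                rw [h0, zero_div, map_zero]
          have h1 := Finset.card_le_card hsub
          have h2 : v0 ∈ t.filter (fun v => a v ≠ 0) := Finset.mem_filter.2 ⟨hv0t, hv00⟩
          have h3 := Finset.card_erase_of_mem h2
          omega
        · have h := congrArg (DL.D i) hsum'
          rw [map_zero, map_sum] at h
          rw [← h]
          refine Finset.sum_congr rfl fun v hv => ?_
          rw [DL.der_of_mdeg_one hpm hi, hconst v hv i hi, mul_zero, zero_add, hext]
      -- strictness: the normalized coefficients are `p`-th powers
      have hchoice : ∀ v : L, ∃ y : K, v ∈ t → y ^ p = a' v := by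
        intro v
        by_cases hv : v ∈ t
        · obtain ⟨y, hy⟩ := (hstrict (a' v)).1 (fun i hi => ha'0 i hi v hv)
          exact ⟨y, fun _ => hy⟩
        · exact ⟨0, fun h => absurd h hv⟩
      choose y hy using hchoice
      have hy0 : ∀ v ∈ t, y v = 0 := by
        refine hindep y ?_
        rw [← hsum']
        exact Finset.sum_congr rfl fun v hv => by rw [hy v hv]
      have : (1 : K) = 0 := by
        rw [← ha'v0, ← hy v0 hv0t, hy0 v0 hv0t, zero_pow hp0]
      exact one_ne_zero this
  -- main argument
  intro b hb
  set β : Fin n → L := fun j => b j ^ p with hβ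
  obtain ⟨s, hs_sub, hspan, hli⟩ := exists_linearIndependent C0 (Set.range β)
  have hsfin : s.Finite := (Set.finite_range β).subset hs_sub
  haveI : Fintype ↥s := hsfin.fintype
  set t : Finset L := hsfin.toFinset with ht
  have htmem : ∀ z : L, z ∈ t ↔ z ∈ s := fun z => hsfin.mem_toFinset
  have htcoe : (↑t : Set L) = s := hsfin.coe_toFinset
  -- each `β j` is a `C0`-combination of the elements of `t`
  have hmem : ∀ j, β j ∈ Submodule.span C0 (↑t : Set L) := by
    intro j
    rw [htcoe, hspan]
    exact Submodule.subset_span (Set.mem_range_self j)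
  have hrep := fun j => (Submodule.mem_span_finset.1 (hmem j)).imp fun _ h => h.2
  choose f hf using hrep
  have hC0w : ∀ (j : Fin n) (v : L), ∃ w : K, algebraMap K L (w ^ p) = ↑(f j v) :=
    fun j v => (hC0mem _).1 (f j v).2
  choose w hw using hC0w
  -- elements of `t` are constants of `L`
  have hconsts : ∀ v ∈ t, ∀ i : Fin e →₀ ℕ, mdeg i = 1 → DL.D i v = 0 := by
    intro v hv i hi
    obtain ⟨j, rfl⟩ := hs_sub ((htmem v).1 hv)
    exact DL.der_pow_char p hpm hi (b j)
  -- `C0`-linear independence of `t`, in explicit form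
  have hindep : ∀ y : L → K, (∑ v ∈ t, algebraMap K L (y v ^ p) * v) = 0 → ∀ v ∈ t, y v = 0 := by
    intro y hy v hv
    rw [Fintype.linearIndependent_iff] at hli
    set g : ↥s → C0 := fun v => ⟨algebraMap K L (y ↑v ^ p), (hC0mem _).2 ⟨y ↑v, rfl⟩⟩ with hg
    have hgsum : ∑ v : ↥s, g v • (↑v : L) = 0 := by
      rw [← hy, ← Finset.sum_coe_sort t (fun v => algebraMap K L (y v ^ p) * v)]
      exact (Fintype.sum_equiv (Equiv.subtypeEquivRight htmem) _ _ (fun v => rfl)).symm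
    have hg0 := hli g hgsum ⟨v, (htmem v).1 hv⟩
    have : algebraMap K L (y v ^ p) = 0 := congrArg Subtype.val hg0
    have : y v ^ p = 0 := hinj (by rw [this, map_zero])
    exact (pow_eq_zero_iff hp0).1 this
  -- the key relation
  have hrel : ∑ v ∈ t, algebraMap K L (∑ j, w j v ^ p * x j) * v = 0 := by
    have e1 : ∀ v ∈ t, algebraMap K L (∑ j, w j v ^ p * x j) * v
        = ∑ j, (↑(f j v) * algebraMap K L (x j)) * v := by
      intro v _
      rw [map_sum, Finset.sum_mul]
      refine Finset.sum_congr rfl fun j _ => ?_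
      rw [map_mul, hw j v]
    rw [Finset.sum_congr rfl e1, Finset.sum_comm]
    have e2 : ∀ j : Fin n, ∑ v ∈ t, (↑(f j v) * algebraMap K L (x j)) * v
        = b j ^ p * algebraMap K L (x j) := by
      intro j
      have hsum : ∑ v ∈ t, (↑(f j v) : L) * v = β j := hf j
      calc ∑ v ∈ t, (↑(f j v) * algebraMap K L (x j)) * v
          = algebraMap K L (x j) * ∑ v ∈ t, (↑(f j v) : L) * v := by
            rw [Finset.mul_sum]
            exact Finset.sum_congr rfl fun v _ => by ring
        _ = algebraMap K L (x j) * β j := by rw [hsum]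
        _ = b j ^ p * algebraMap K L (x j) := by rw [hβ, mul_comm]
    rw [Finset.sum_congr rfl fun j _ => e2 j]
    exact hb
  -- conclude
  have h0 := stepD t hconsts hindep (fun v => ∑ j, w j v ^ p * x j) hrel
  have hw0 : ∀ v ∈ t, ∀ j, w j v = 0 := fun v hv => hind (fun j => w j v) (h0 v hv)
  intro j
  have hβ0 : β j = 0 := by
    rw [← hf j]
    refine Finset.sum_eq_zero fun v hv => ?_
    have : (↑(f j v) : L) = 0 := by
      rw [← hw j v, hw0 v hv j, zero_pow hp0, map_zero]
    show (↑(f j v) : L) * v = 0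
    rw [this, zero_mul]
  exact (pow_eq_zero_iff hp0).1 hβ0
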